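/- Let 0 < c < 1 be real and let μ_c be the measure on ℝ given by ((1-c)/2)·δ_{-(1+c)} + ((1-c)/2)·δ_{1+c} plus the measure with density ρ_c with respect to Lebesgue measure. Then μ_c is a probability measure, and for every n ≥ 0 its 2n-th moment satisfies ∫ t^{2n} dμ_c(t) = ∑_{k=0}^{n} (binom(2n, k) - binom(2n, k-1)) · c^k, where binom(2n, -1) = 0. -/

import Mathlib

open MeasureTheory

/-- The Kesten–McKay density `ρ_c`, extended by zero outside `[-2√c, 2√c]`. -/
noncomputable def kestenMcKayDensity (c t : ℝ) : ℝ :=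
  if |t| ≤ 2 * Real.sqrt c then
    (1 + c) / (2 * Real.pi) * Real.sqrt (4 * c - t ^ 2) / ((1 + c) ^ 2 - t ^ 2)
  else 0

open Real intervalIntegral


noncomputable def bb (m k : ℕ) : ℝ :=
  (m.choose k : ℝ) - if k = 0 then 0 else (m.choose (k - 1) : ℝ)

lemma bb_zero (m : ℕ) : bb m 0 = 1 := by simp [bb]

lemma bb_pascal (m k : ℕ) : bb (m + 2) (k + 2) = bb m (k + 2) + 2 * bb m (k + 1) + bb m k := by
  rcases k with _ | k
  · simp [bb, Nat.choose_succ_succ]; push_cast; ring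
  · simp only [bb, Nat.succ_sub_one, if_neg (Nat.succ_ne_zero _)]
    simp only [show m + 2 = (m + 1) + 1 from rfl, Nat.choose_succ_succ (m+1),
      Nat.choose_succ_succ m]
    push_cast; ring

lemma bb_one (m : ℕ) : bb (m + 2) 1 = bb m 1 + 2 * bb m 0 := by
  simp [bb, Nat.choose_one_right]; push_cast; ring

lemma cb_diff (n : ℕ) : ((2 * n).choose n : ℝ) - ((2 * n).choose (n + 1) : ℝ) = catalan n := by
  have h2 : ((2 * n).choose (n + 1) : ℝ) * (n + 1) = ((2 * n).choose n : ℝ) * n := by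
    have h := Nat.choose_succ_right_eq (2 * n) n
    have h3 : 2 * n - n = n := by omega
    rw [h3] at h
    exact_mod_cast congrArg (Nat.cast (R := ℝ)) h
  have h4 : ((n : ℝ) + 1) * catalan n = (2 * n).choose n := by
    have h := succ_mul_catalan_eq_centralBinom n
    have h' : ((n + 1) * catalan n : ℕ) = ((2 * n).choose n : ℕ) := by
      rw [h, Nat.centralBinom_eq_two_mul_choose]
    exact_mod_cast congrArg (Nat.cast (R := ℝ)) h'
  have hne : ((n : ℝ) + 1) ≠ 0 := by positivity
  refine mul_left_cancel₀ hne ?_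
  linear_combination -h2 - h4

lemma bb_central (n : ℕ) : bb (2 * n) n = catalan n := by
  rcases n with _ | n
  · simp [bb]
  · have hsymm : (2 * (n + 1)).choose n = (2 * (n + 1)).choose (n + 2) := by
      rw [← Nat.choose_symm (by omega)]; congr 1; omega
    have := cb_diff (n + 1)
    simp only [bb, if_neg (Nat.succ_ne_zero _), Nat.succ_sub_one]
    rw [hsymm]
    convert this using 3 <;> omega

lemma bb_central' (n : ℕ) : bb (2 * n) (n + 1) = -(catalan n) := by
  have := cb_diff n
  simp only [bb, if_neg (Nat.succ_ne_zero _), Nat.succ_sub_one]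
  linarith


open Finset in
lemma P_rec (x : ℝ) (n : ℕ) :
    ∑ k ∈ range (n + 2), bb (2 * (n + 1)) k * x ^ k
      = (1 + x) ^ 2 * (∑ k ∈ range (n + 1), bb (2 * n) k * x ^ k)
        - catalan n * (x ^ (n + 1) + x ^ (n + 2)) := by
  have h2n : 2 * (n + 1) = 2 * n + 2 := by ring
  set S0 := ∑ k ∈ range (n + 1), bb (2 * n) k * x ^ k with hS0
  -- expand LHS via sum_range_succ' twice
  have e1 : ∑ k ∈ range (n + 2), bb (2 * (n + 1)) k * x ^ k
      = (∑ k ∈ range n, bb (2 * n + 2) (k + 2) * x ^ (k + 2))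
        + bb (2 * n + 2) 1 * x ^ 1 + bb (2 * n + 2) 0 * x ^ 0 := by
    rw [h2n, Finset.sum_range_succ', Finset.sum_range_succ']
  have e2 : ∀ k, bb (2 * n + 2) (k + 2) * x ^ (k + 2)
      = bb (2 * n) (k + 2) * x ^ (k + 2) + 2 * (bb (2 * n) (k + 1) * x ^ (k + 2))
        + bb (2 * n) k * x ^ (k + 2) := fun k => by rw [bb_pascal]; ring
  -- sum manipulations
  have ha : ∑ k ∈ range n, bb (2 * n) (k + 2) * x ^ (k + 2)
      = S0 + bb (2 * n) (n + 1) * x ^ (n + 1) - bb (2 * n) 0 * x ^ 0 - bb (2 * n) 1 * x ^ 1 := by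
    have h1 : ∑ k ∈ range (n + 2), bb (2 * n) k * x ^ k
        = (∑ k ∈ range n, bb (2 * n) (k + 2) * x ^ (k + 2))
          + bb (2 * n) 1 * x ^ 1 + bb (2 * n) 0 * x ^ 0 := by
      rw [Finset.sum_range_succ', Finset.sum_range_succ']
    have h2 : ∑ k ∈ range (n + 2), bb (2 * n) k * x ^ k
        = S0 + bb (2 * n) (n + 1) * x ^ (n + 1) := by
      rw [Finset.sum_range_succ]
    linarith [h1, h2]
  have hb : ∑ k ∈ range n, bb (2 * n) (k + 1) * x ^ (k + 2)
      = x * (S0 - bb (2 * n) 0 * x ^ 0) := by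
    have h1 : S0 = (∑ k ∈ range n, bb (2 * n) (k + 1) * x ^ (k + 1)) + bb (2 * n) 0 * x ^ 0 := by
      rw [hS0, Finset.sum_range_succ']
    rw [h1, add_sub_cancel_right, Finset.mul_sum]
    exact Finset.sum_congr rfl fun k _ => by ring
  have hc : ∑ k ∈ range n, bb (2 * n) k * x ^ (k + 2)
      = x ^ 2 * (S0 - bb (2 * n) n * x ^ n) := by
    have h1 : S0 = (∑ k ∈ range n, bb (2 * n) k * x ^ k) + bb (2 * n) n * x ^ n := by
      rw [hS0, Finset.sum_range_succ]
    rw [h1, add_sub_cancel_right, Finset.mul_sum]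
    exact Finset.sum_congr rfl fun k _ => by ring
  rw [e1, Finset.sum_congr rfl (fun k _ => e2 k), Finset.sum_add_distrib,
    Finset.sum_add_distrib, ← Finset.mul_sum, ha, hb, hc,
    bb_one, bb_central, bb_central']
  simp only [bb_zero]
  have hbb1 : bb (2 * n) 1 = bb (2 * n) 1 := rfl
  ring

open Finset in
theorem comb_main (x : ℝ) (n : ℕ) :
    (∑ k ∈ Finset.range (n + 1), bb (2 * n) k * x ^ k)
      + ∑ j ∈ Finset.range n, (catalan j : ℝ) * x ^ (j + 1) * (1 + x) ^ (2 * (n - 1 - j) + 1)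
      = (1 + x) ^ (2 * n) := by
  induction n with
  | zero => simp [bb]
  | succ n ih =>
    have hR : ∑ j ∈ range (n + 1), (catalan j : ℝ) * x ^ (j + 1) * (1 + x) ^ (2 * (n - j) + 1)
        = (1 + x) ^ 2 * (∑ j ∈ range n, (catalan j : ℝ) * x ^ (j + 1) * (1 + x) ^ (2 * (n - 1 - j) + 1))
          + (catalan n : ℝ) * x ^ (n + 1) * (1 + x) := by
      rw [Finset.sum_range_succ, Finset.mul_sum]
      have : ∀ j ∈ range n, (catalan j : ℝ) * x ^ (j + 1) * (1 + x) ^ (2 * (n - j) + 1)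
          = (1 + x) ^ 2 * ((catalan j : ℝ) * x ^ (j + 1) * (1 + x) ^ (2 * (n - 1 - j) + 1)) := by
        intro j hj
        have hj' : j < n := Finset.mem_range.mp hj
        have : 2 * (n - j) + 1 = (2 * (n - 1 - j) + 1) + 2 := by omega
        rw [this, pow_add]; ring
      rw [Finset.sum_congr rfl this]
      have h0 : 2 * (n - n) + 1 = 1 := by omega
      rw [h0]; ring
    have h1 : 2 * (n + 1) - 1 - 0 = 2 * n + 1 := by omega
    have goal_sums : ∀ j ∈ range (n+1), (catalan j : ℝ) * x ^ (j + 1) * (1 + x) ^ (2 * (n + 1 - 1 - j) + 1)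
        = (catalan j : ℝ) * x ^ (j + 1) * (1 + x) ^ (2 * (n - j) + 1) := by
      intro j hj
      have : 2 * (n + 1 - 1 - j) + 1 = 2 * (n - j) + 1 := by omega
      rw [this]
    rw [Finset.sum_congr rfl goal_sums, P_rec, hR]
    have h2 : 2 * (n + 1) = 2 * n + 2 := by ring
    rw [h2, show (1 + x) ^ (2 * n + 2) = (1 + x) ^ 2 * (1 + x) ^ (2 * n) by ring, ← ih]
    ring

open Real intervalIntegral

lemma denom_pos {c : ℝ} (h0 : 0 < c) (h1 : c < 1) (x : ℝ) : 0 < 1 + c * Real.cos x := by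
  nlinarith [Real.neg_one_le_cos x]

lemma hasDerivAt_F {c : ℝ} (h0 : 0 < c) (h1 : c < 1) (x : ℝ) :
    HasDerivAt (fun φ : ℝ =>
        (φ - Real.arctan (c * Real.sin (2 * φ) / (1 + c * Real.cos (2 * φ)))) / (1 - c ^ 2))
      (1 / ((1 + c) ^ 2 - 4 * c * Real.sin x ^ 2)) x := by
  have hc2 : (1 : ℝ) - c ^ 2 ≠ 0 := by nlinarith
  have hv : 1 + c * Real.cos (2 * x) ≠ 0 := (denom_pos h0 h1 (2 * x)).ne'
  have h2 : HasDerivAt (fun φ : ℝ => 2 * φ) 2 x := by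
    simpa using (hasDerivAt_id x).const_mul 2
  have hsin : HasDerivAt (fun φ : ℝ => c * Real.sin (2 * φ))
      (c * (Real.cos (2 * x) * 2)) x :=
    (((Real.hasDerivAt_sin (2 * x)).comp x h2)).const_mul c
  have hcos : HasDerivAt (fun φ : ℝ => 1 + c * Real.cos (2 * φ))
      (c * (-Real.sin (2 * x) * 2)) x := by
    have := (((Real.hasDerivAt_cos (2 * x)).comp x h2)).const_mul c
    simpa using this.const_add 1
  have hq : HasDerivAt (fun φ : ℝ => c * Real.sin (2 * φ) / (1 + c * Real.cos (2 * φ)))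
      ((c * (Real.cos (2 * x) * 2) * (1 + c * Real.cos (2 * x))
        - c * Real.sin (2 * x) * (c * (-Real.sin (2 * x) * 2)))
        / (1 + c * Real.cos (2 * x)) ^ 2) x := hsin.div hcos hv
  have harc : HasDerivAt (fun φ : ℝ =>
      Real.arctan (c * Real.sin (2 * φ) / (1 + c * Real.cos (2 * φ))))
      ((1 / (1 + (c * Real.sin (2 * x) / (1 + c * Real.cos (2 * x))) ^ 2))
        * ((c * (Real.cos (2 * x) * 2) * (1 + c * Real.cos (2 * x))
        - c * Real.sin (2 * x) * (c * (-Real.sin (2 * x) * 2)))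
        / (1 + c * Real.cos (2 * x)) ^ 2)) x :=
    (Real.hasDerivAt_arctan _).comp x hq
  have hF := ((hasDerivAt_id x).sub harc).div_const (1 - c ^ 2)
  refine hF.congr_deriv ?_
  have hz : Real.sin (2 * x) ^ 2 = 1 - Real.cos (2 * x) ^ 2 := by
    have := Real.sin_sq_add_cos_sq (2 * x); linarith
  have hs2 : Real.sin x ^ 2 = (1 - Real.cos (2 * x)) / 2 := by
    rw [Real.cos_two_mul]
    have := Real.sin_sq_add_cos_sq x; linarith
  set y := Real.cos (2 * x) with hy
  set z := Real.sin (2 * x) with hzz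
  have hD : (1 + c) ^ 2 - 4 * c * Real.sin x ^ 2 = 1 + c ^ 2 + 2 * c * y := by
    rw [hs2]; ring
  have hDpos : (0:ℝ) < 1 + c ^ 2 + 2 * c * y := by
    have := denom_pos h0 h1 (2 * x)
    nlinarith [this]
  have h1q : 1 + (c * z / (1 + c * y)) ^ 2 ≠ 0 := by positivity
  have hD' : 1 + c * y * 2 + c ^ 2 ≠ 0 := by convert hDpos.ne' using 1; ring
  rw [hD]
  field_simp
  rw [eq_div_iff (by convert hDpos.ne' using 1; ring)]
  linear_combination (-c ^ 2 * (2 + 2 * c * y)) * hz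

lemma D_pos {c : ℝ} (h0 : 0 < c) (h1 : c < 1) (x : ℝ) :
    0 < (1 + c) ^ 2 - 4 * c * Real.sin x ^ 2 := by
  nlinarith [Real.sin_sq_le_one x, sq_nonneg (Real.sin x)]

lemma contD {c : ℝ} (h0 : 0 < c) (h1 : c < 1) :
    Continuous fun x : ℝ => (1 + c) ^ 2 - 4 * c * Real.sin x ^ 2 := by fun_prop

lemma intK {c : ℝ} (h0 : 0 < c) (h1 : c < 1) :
    ∫ φ in (-(Real.pi / 2))..(Real.pi / 2), 1 / ((1 + c) ^ 2 - 4 * c * Real.sin φ ^ 2)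
      = Real.pi / (1 - c ^ 2) := by
  have hcont : Continuous fun x : ℝ => 1 / ((1 + c) ^ 2 - 4 * c * Real.sin x ^ 2) :=
    continuous_const.div (contD h0 h1) (fun x => (D_pos h0 h1 x).ne')
  rw [intervalIntegral.integral_eq_sub_of_hasDerivAt
    (fun x _ => hasDerivAt_F h0 h1 x) (hcont.intervalIntegrable _ _)]
  have hp : Real.sin (2 * (Real.pi / 2)) = 0 := by
    rw [show 2 * (Real.pi / 2) = Real.pi by ring, Real.sin_pi]
  have hm : Real.sin (2 * (-(Real.pi / 2))) = 0 := by
    rw [show 2 * (-(Real.pi / 2)) = -Real.pi by ring, Real.sin_neg, Real.sin_pi, neg_zero]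
  rw [hp, hm]
  simp only [mul_zero, zero_div, Real.arctan_zero, sub_zero]
  have hc2 : (1:ℝ) - c ^ 2 ≠ 0 := by nlinarith
  field_simp
  ring

open Finset in
lemma sin_pow_even (j : ℕ) :
    ∫ φ in (-(Real.pi / 2))..(Real.pi / 2), Real.sin φ ^ (2 * j)
      = Real.pi * ∏ i ∈ range j, (2 * (i : ℝ) + 1) / (2 * i + 2) := by
  induction j with
  | zero => simp
  | succ k ih =>
    rw [Finset.prod_range_succ_comm, mul_left_comm, ← ih,
      show 2 * (k + 1) = 2 * k + 2 by ring, integral_sin_pow]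
    rw [Real.cos_pi_div_two, show -(Real.pi/2) = -(Real.pi/2) from rfl]
    have : Real.cos (-(Real.pi / 2)) = 0 := by rw [Real.cos_neg, Real.cos_pi_div_two]
    rw [this]
    push_cast
    ring

lemma prod_eq_centralBinom (j : ℕ) :
    (∏ i ∈ Finset.range j, (2 * (i : ℝ) + 1) / (2 * i + 2)) = (Nat.centralBinom j : ℝ) / 4 ^ j := by
  induction j with
  | zero => simp [Nat.centralBinom]
  | succ k ih =>
    rw [Finset.prod_range_succ, ih]
    have h := Nat.succ_mul_centralBinom_succ k
    have h' : ((k:ℝ) + 1) * (Nat.centralBinom (k + 1) : ℝ) = 2 * (2 * k + 1) * Nat.centralBinom k := by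
      exact_mod_cast congrArg (Nat.cast (R := ℝ)) h
    have hk : ((k:ℝ) + 1) ≠ 0 := by positivity
    have key : (Nat.centralBinom (k + 1) : ℝ) = 2 * (2 * k + 1) * Nat.centralBinom k / (k + 1) := by
      field_simp
      linarith [h']
    rw [key, pow_succ]
    have h4 : (4:ℝ) ^ k ≠ 0 := by positivity
    field_simp
    ring

lemma sin_pow_cos_sq (j : ℕ) :
    ∫ φ in (-(Real.pi / 2))..(Real.pi / 2), Real.sin φ ^ (2 * j) * Real.cos φ ^ 2
      = Real.pi * (catalan j : ℝ) / (2 * 4 ^ j) := by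
  have h1 : ∀ φ : ℝ, Real.sin φ ^ (2 * j) * Real.cos φ ^ 2
      = Real.sin φ ^ (2 * j) - Real.sin φ ^ (2 * (j + 1)) := by
    intro φ
    have hc : Real.cos φ ^ 2 = 1 - Real.sin φ ^ 2 := by
      have := Real.sin_sq_add_cos_sq φ; linarith
    rw [hc, show 2 * (j + 1) = 2 * j + 2 by ring, pow_add]
    ring
  rw [intervalIntegral.integral_congr (fun φ _ => h1 φ), intervalIntegral.integral_sub
    ((by fun_prop : Continuous fun x => Real.sin x ^ (2 * j)).intervalIntegrable _ _)
    ((by fun_prop : Continuous fun x => Real.sin x ^ (2 * (j + 1))).intervalIntegrable _ _),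
    sin_pow_even, sin_pow_even, prod_eq_centralBinom, prod_eq_centralBinom]
  have hcb : ((j:ℝ) + 1) * (Nat.centralBinom (j + 1) : ℝ) = 2 * (2 * j + 1) * Nat.centralBinom j := by
    exact_mod_cast congrArg (Nat.cast (R := ℝ)) (Nat.succ_mul_centralBinom_succ j)
  have hcat : ((j:ℝ) + 1) * (catalan j : ℝ) = (Nat.centralBinom j : ℝ) := by
    exact_mod_cast congrArg (Nat.cast (R := ℝ)) (succ_mul_catalan_eq_centralBinom j)
  have hj : ((j:ℝ) + 1) ≠ 0 := by positivity
  have h5 : (Nat.centralBinom (j + 1) : ℝ) = 2 * (2 * j + 1) * catalan j := by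
    have h6 : ((j:ℝ) + 1) * (Nat.centralBinom (j + 1) : ℝ)
        = ((j:ℝ) + 1) * (2 * (2 * j + 1) * catalan j) := by
      rw [hcb, ← hcat]; ring
    exact mul_left_cancel₀ hj h6
  rw [h5, ← hcat, pow_succ]
  have h4 : (4:ℝ) ^ j ≠ 0 := by positivity
  field_simp
  ring

open Finset in
lemma Rshift (x : ℝ) (n : ℕ) :
    ∑ j ∈ range (n + 1), (catalan j : ℝ) * x ^ (j + 1) * (1 + x) ^ (2 * (n - j) + 1)
      = (1 + x) ^ 2 * (∑ j ∈ range n, (catalan j : ℝ) * x ^ (j + 1) * (1 + x) ^ (2 * (n - 1 - j) + 1))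
        + (catalan n : ℝ) * x ^ (n + 1) * (1 + x) := by
  rw [Finset.sum_range_succ, Finset.mul_sum]
  have h : ∀ j ∈ range n, (catalan j : ℝ) * x ^ (j + 1) * (1 + x) ^ (2 * (n - j) + 1)
      = (1 + x) ^ 2 * ((catalan j : ℝ) * x ^ (j + 1) * (1 + x) ^ (2 * (n - 1 - j) + 1)) := by
    intro j hj
    have hj' : j < n := Finset.mem_range.mp hj
    have : 2 * (n - j) + 1 = (2 * (n - 1 - j) + 1) + 2 := by omega
    rw [this, pow_add]; ring
  rw [Finset.sum_congr rfl h]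
  have h0 : 2 * (n - n) + 1 = 1 := by omega
  rw [h0]; ring

lemma J_zero {c : ℝ} (h0 : 0 < c) (h1 : c < 1) :
    ∫ φ in (-(Real.pi / 2))..(Real.pi / 2),
        Real.cos φ ^ 2 / ((1 + c) ^ 2 - 4 * c * Real.sin φ ^ 2)
      = Real.pi / (2 * (1 + c)) := by
  have hc4 : (4:ℝ) * c ≠ 0 := by positivity
  have hpt : ∀ φ : ℝ, Real.cos φ ^ 2 / ((1 + c) ^ 2 - 4 * c * Real.sin φ ^ 2)
      = 1 / (4 * c) - (1 - c) ^ 2 / (4 * c) * (1 / ((1 + c) ^ 2 - 4 * c * Real.sin φ ^ 2)) := by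
    intro φ
    have hD := (D_pos h0 h1 φ).ne'
    have hcos : Real.cos φ ^ 2 = 1 - Real.sin φ ^ 2 := by
      have := Real.sin_sq_add_cos_sq φ; linarith
    rw [hcos]
    have hD' : (1 + c) ^ 2 - Real.sin φ ^ 2 * c * 4 ≠ 0 := by convert hD using 1; ring
    field_simp
    ring
  rw [intervalIntegral.integral_congr (fun φ _ => hpt φ)]
  have hint : IntervalIntegrable (fun φ : ℝ => (1 - c) ^ 2 / (4 * c) *
      (1 / ((1 + c) ^ 2 - 4 * c * Real.sin φ ^ 2))) MeasureTheory.volume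
      (-(Real.pi / 2)) (Real.pi / 2) := by
    apply Continuous.intervalIntegrable
    exact continuous_const.mul (continuous_const.div (contD h0 h1) fun x => (D_pos h0 h1 x).ne')
  rw [intervalIntegral.integral_sub (intervalIntegrable_const) hint,
    intervalIntegral.integral_const, intervalIntegral.integral_const_mul, intK h0 h1]
  have hc1 : (1:ℝ) + c ≠ 0 := by positivity
  have hc2 : (1:ℝ) - c ^ 2 ≠ 0 := by nlinarith
  have hc3 : (1:ℝ) - c ≠ 0 := by nlinarith
  have : (1:ℝ) - c ^ 2 = (1 - c) * (1 + c) := by ring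
  rw [smul_eq_mul, this]
  field_simp
  ring

lemma J_rec {c : ℝ} (h0 : 0 < c) (h1 : c < 1) (n : ℕ) :
    ∫ φ in (-(Real.pi / 2))..(Real.pi / 2),
        Real.sin φ ^ (2 * (n + 1)) * Real.cos φ ^ 2 / ((1 + c) ^ 2 - 4 * c * Real.sin φ ^ 2)
      = ((1 + c) ^ 2 * (∫ φ in (-(Real.pi / 2))..(Real.pi / 2),
          Real.sin φ ^ (2 * n) * Real.cos φ ^ 2 / ((1 + c) ^ 2 - 4 * c * Real.sin φ ^ 2))
        - Real.pi * (catalan n : ℝ) / (2 * 4 ^ n)) / (4 * c) := by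
  have hc4 : (4:ℝ) * c ≠ 0 := by positivity
  have hpt : ∀ φ : ℝ, Real.sin φ ^ (2 * (n + 1)) * Real.cos φ ^ 2 / ((1 + c) ^ 2 - 4 * c * Real.sin φ ^ 2)
      = ((1 + c) ^ 2 * (Real.sin φ ^ (2 * n) * Real.cos φ ^ 2 / ((1 + c) ^ 2 - 4 * c * Real.sin φ ^ 2))
        - Real.sin φ ^ (2 * n) * Real.cos φ ^ 2) / (4 * c) := by
    intro φ
    have hD := (D_pos h0 h1 φ).ne'
    rw [show 2 * (n + 1) = 2 * n + 2 by ring, pow_add]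
    have hD' : (1 + c) ^ 2 - Real.sin φ ^ 2 * c * 4 ≠ 0 := by convert hD using 1; ring
    field_simp
    ring
  rw [intervalIntegral.integral_congr (fun φ _ => hpt φ)]
  have hcont1 : Continuous fun φ : ℝ =>
      (1 + c) ^ 2 * (Real.sin φ ^ (2 * n) * Real.cos φ ^ 2 / ((1 + c) ^ 2 - 4 * c * Real.sin φ ^ 2)) :=
    continuous_const.mul (Continuous.div (by fun_prop) (contD h0 h1) fun x => (D_pos h0 h1 x).ne')
  have hcont2 : Continuous fun φ : ℝ => Real.sin φ ^ (2 * n) * Real.cos φ ^ 2 := by fun_prop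
  rw [intervalIntegral.integral_div, intervalIntegral.integral_sub
    (hcont1.intervalIntegrable _ _) (hcont2.intervalIntegrable _ _),
    intervalIntegral.integral_const_mul, sin_pow_cos_sq]

open Finset in
lemma J_closed {c : ℝ} (h0 : 0 < c) (h1 : c < 1) (n : ℕ) :
    ∫ φ in (-(Real.pi / 2))..(Real.pi / 2),
        Real.sin φ ^ (2 * n) * Real.cos φ ^ 2 / ((1 + c) ^ 2 - 4 * c * Real.sin φ ^ 2)
      = 2 * Real.pi / ((1 + c) * (4 * c) ^ (n + 1))
        * (c * (1 + c) ^ (2 * n) - ∑ j ∈ range n,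
            (catalan j : ℝ) * c ^ (j + 1) * (1 + c) ^ (2 * (n - 1 - j) + 1)) := by
  induction n with
  | zero =>
    simp only [Nat.mul_zero, pow_zero, Finset.range_zero, Finset.sum_empty, sub_zero, one_mul,
      mul_one, pow_one, zero_add]
    rw [J_zero h0 h1]
    have hc1 : (1:ℝ) + c ≠ 0 := by positivity
    have hc : c ≠ 0 := ne_of_gt h0
    field_simp
    ring
  | succ n ih =>
    have hsum : ∀ j ∈ range (n + 1), (catalan j : ℝ) * c ^ (j + 1) * (1 + c) ^ (2 * (n + 1 - 1 - j) + 1)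
        = (catalan j : ℝ) * c ^ (j + 1) * (1 + c) ^ (2 * (n - j) + 1) := by
      intro j hj
      have : 2 * (n + 1 - 1 - j) + 1 = 2 * (n - j) + 1 := by omega
      rw [this]
    rw [J_rec h0 h1 n, ih, Finset.sum_congr rfl hsum, Rshift]
    have hc1 : (1:ℝ) + c ≠ 0 := by positivity
    have hc4 : (4:ℝ) * c ≠ 0 := by positivity
    have h4n : ((4:ℝ) * c) ^ (n + 1) = 4 * 4 ^ n * (c * c ^ n) := by
      rw [mul_pow]; ring
    have h4n2 : ((4:ℝ) * c) ^ (n + 1 + 1) = 16 * 4 ^ n * (c ^ 2 * c ^ n) := by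
      rw [mul_pow]; ring
    have hp2 : (1 + c) ^ (2 * (n + 1)) = (1 + c) ^ (2 * n) * (1 + c) ^ 2 := by
      rw [← pow_add]; ring_nf
    have hcn1 : c ^ (n + 1) = c * c ^ n := by ring
    rw [h4n, h4n2, hp2, hcn1]
    have h4 : (4:ℝ) ^ n ≠ 0 := by positivity
    have hcn : c ^ n ≠ 0 := by positivity
    have hc : c ≠ 0 := ne_of_gt h0
    field_simp
    ring

open Finset in
lemma density_moment {c : ℝ} (h0 : 0 < c) (h1 : c < 1) (n : ℕ) :
    ∫ t : ℝ, t ^ (2 * n) * kestenMcKayDensity c t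
      = c * (1 + c) ^ (2 * n) - ∑ j ∈ range n,
          (catalan j : ℝ) * c ^ (j + 1) * (1 + c) ^ (2 * (n - 1 - j) + 1) := by
  set s := Real.sqrt c with hs
  have hs2 : s ^ 2 = c := Real.sq_sqrt h0.le
  have hspos : 0 < s := Real.sqrt_pos.mpr h0
  set F : ℝ → ℝ := fun t =>
    t ^ (2 * n) * ((1 + c) / (2 * Real.pi) * Real.sqrt (4 * c - t ^ 2) / ((1 + c) ^ 2 - t ^ 2))
    with hF
  have hind : (fun t : ℝ => t ^ (2 * n) * kestenMcKayDensity c t)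
      = Set.indicator (Set.Icc (-(2 * s)) (2 * s)) F := by
    funext t
    by_cases h : |t| ≤ 2 * s
    · rw [Set.indicator_of_mem (by rw [Set.mem_Icc]; exact abs_le.mp h)]
      simp only [kestenMcKayDensity, hs, if_pos (show |t| ≤ 2 * √c from h), hF]
    · rw [Set.indicator_of_notMem (by rw [Set.mem_Icc]; exact fun hm => h (abs_le.mpr hm))]
      simp only [kestenMcKayDensity, hs, if_neg (show ¬ |t| ≤ 2 * √c from h), mul_zero]
  have hDt : ∀ t ∈ Set.Icc (-(2 * s)) (2 * s), (1 + c) ^ 2 - t ^ 2 ≠ 0 := by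
    intro t ht
    rw [Set.mem_Icc] at ht
    have h2 : t ^ 2 ≤ 4 * c := by nlinarith [ht.1, ht.2, hs2]
    nlinarith
  have hFcont : ContinuousOn F (Set.Icc (-(2 * s)) (2 * s)) := by
    apply ContinuousOn.mul (continuousOn_pow _)
    apply ContinuousOn.div
    · exact (continuousOn_const.mul ((Real.continuous_sqrt).comp_continuousOn (by fun_prop)))
    · fun_prop
    · exact hDt
  rw [hind, MeasureTheory.integral_indicator measurableSet_Icc,
    MeasureTheory.integral_Icc_eq_integral_Ioc,
    ← intervalIntegral.integral_of_le (by linarith : -(2 * s) ≤ 2 * s)]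
  -- substitution t = 2 s sin φ
  have hg : ∀ x ∈ Set.uIcc (-(Real.pi / 2)) (Real.pi / 2),
      HasDerivAt (fun φ => 2 * s * Real.sin φ) (2 * s * Real.cos x) x :=
    fun x _ => (Real.hasDerivAt_sin x).const_mul (2 * s)
  have himg : (fun φ => 2 * s * Real.sin φ) '' Set.uIcc (-(Real.pi / 2)) (Real.pi / 2)
      ⊆ Set.Icc (-(2 * s)) (2 * s) := by
    rintro _ ⟨φ, _, rfl⟩
    dsimp only
    rw [Set.mem_Icc]
    constructor <;> nlinarith [Real.neg_one_le_sin φ, Real.sin_le_one φ]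
  have hsub := intervalIntegral.integral_comp_smul_deriv' hg
    (by fun_prop : Continuous fun x => 2 * s * Real.cos x).continuousOn
    (hFcont.mono himg)
  rw [show 2 * s * Real.sin (-(Real.pi / 2)) = -(2 * s) by
      rw [Real.sin_neg, Real.sin_pi_div_two]; ring,
    show 2 * s * Real.sin (Real.pi / 2) = 2 * s by rw [Real.sin_pi_div_two]; ring] at hsub
  simp only [Function.comp] at hsub
  rw [← hsub]
  -- simplify integrand
  have hcongr : ∀ φ ∈ Set.uIcc (-(Real.pi / 2)) (Real.pi / 2),
      (2 * s * Real.cos φ) • F (2 * s * Real.sin φ)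
        = ((1 + c) / (2 * Real.pi) * (4 * c) ^ (n + 1))
            * (Real.sin φ ^ (2 * n) * Real.cos φ ^ 2 / ((1 + c) ^ 2 - 4 * c * Real.sin φ ^ 2)) := by
    intro φ hφ
    rw [Set.uIcc_of_le (by linarith [Real.pi_pos]), Set.mem_Icc] at hφ
    have hcos : 0 ≤ Real.cos φ := Real.cos_nonneg_of_mem_Icc (by constructor <;> linarith [hφ.1, hφ.2])
    have hsqrt : Real.sqrt (4 * c - (2 * s * Real.sin φ) ^ 2) = 2 * s * Real.cos φ := by
      have he : 4 * c - (2 * s * Real.sin φ) ^ 2 = (2 * s * Real.cos φ) ^ 2 := by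
        have := Real.sin_sq_add_cos_sq φ
        nlinarith [hs2]
      rw [he, Real.sqrt_sq (by positivity)]
    have hpow : (2 * s * Real.sin φ) ^ (2 * n) = (4 * c) ^ n * Real.sin φ ^ (2 * n) := by
      rw [pow_mul, pow_mul, ← mul_pow]
      congr 1
      nlinarith [hs2]
    have hden : (1 + c) ^ 2 - (2 * s * Real.sin φ) ^ 2 = (1 + c) ^ 2 - 4 * c * Real.sin φ ^ 2 := by
      nlinarith [hs2]
    rw [hF]
    simp only [smul_eq_mul]
    rw [hsqrt, hpow, hden]
    have hD := D_pos h0 h1 φ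
    have hpi := Real.pi_pos
    have h4s : (2 * s) * (2 * s) = 4 * c := by nlinarith [hs2]
    field_simp
    rw [pow_succ]
    linear_combination (4 * (4 * c) ^ n * Real.sin φ ^ (2 * n) * (1 + c) * Real.cos φ ^ 2
      - 4 * Real.cos φ ^ 2 * c * c ^ n * Real.sin φ ^ (2 * n) * 4 ^ n) * hs2
  rw [intervalIntegral.integral_congr hcongr, intervalIntegral.integral_const_mul,
    J_closed h0 h1 n]
  have hpi : Real.pi ≠ 0 := Real.pi_ne_zero
  have hc1 : (1:ℝ) + c ≠ 0 := by positivity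
  have h4c : ((4:ℝ) * c) ^ (n + 1) ≠ 0 := by positivity
  field_simp

lemma kmk_nonneg {c : ℝ} (h0 : 0 < c) (h1 : c < 1) (t : ℝ) : 0 ≤ kestenMcKayDensity c t := by
  unfold kestenMcKayDensity
  split_ifs with h
  · have habs := abs_le.mp h
    have hsq : Real.sqrt c ^ 2 = c := Real.sq_sqrt h0.le
    have ht2 : t ^ 2 ≤ 4 * c := by nlinarith [sq_abs t, abs_nonneg t, Real.sqrt_nonneg c]
    have hD : 0 < (1 + c) ^ 2 - t ^ 2 := by nlinarith
    have hpi := Real.pi_pos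
    apply div_nonneg _ hD.le
    apply mul_nonneg _ (Real.sqrt_nonneg _)
    positivity
  · exact le_refl 0

lemma kmk_measurable (c : ℝ) : Measurable (kestenMcKayDensity c) := by
  unfold kestenMcKayDensity
  apply Measurable.ite
  · exact measurableSet_le (by fun_prop) measurable_const
  · apply Measurable.div _ (by fun_prop)
    exact (measurable_const.mul (Real.continuous_sqrt.measurable.comp (by fun_prop)))
  · exact measurable_const

lemma integrable_moment {c : ℝ} (h0 : 0 < c) (h1 : c < 1) (n : ℕ) :
    MeasureTheory.Integrable (fun t : ℝ => t ^ (2 * n) * kestenMcKayDensity c t)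
      MeasureTheory.volume := by
  set s := Real.sqrt c with hs
  have hs2 : s ^ 2 = c := Real.sq_sqrt h0.le
  have hspos : 0 < s := Real.sqrt_pos.mpr h0
  set F : ℝ → ℝ := fun t =>
    t ^ (2 * n) * ((1 + c) / (2 * Real.pi) * Real.sqrt (4 * c - t ^ 2) / ((1 + c) ^ 2 - t ^ 2))
    with hF
  have hind : (fun t : ℝ => t ^ (2 * n) * kestenMcKayDensity c t)
      = Set.indicator (Set.Icc (-(2 * s)) (2 * s)) F := by
    funext t
    by_cases h : |t| ≤ 2 * s
    · rw [Set.indicator_of_mem (by rw [Set.mem_Icc]; exact abs_le.mp h)]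
      simp only [kestenMcKayDensity, hs, if_pos (show |t| ≤ 2 * √c from h), hF]
    · rw [Set.indicator_of_notMem (by rw [Set.mem_Icc]; exact fun hm => h (abs_le.mpr hm))]
      simp only [kestenMcKayDensity, hs, if_neg (show ¬ |t| ≤ 2 * √c from h), mul_zero]
  have hDt : ∀ t ∈ Set.Icc (-(2 * s)) (2 * s), (1 + c) ^ 2 - t ^ 2 ≠ 0 := by
    intro t ht
    rw [Set.mem_Icc] at ht
    have h2 : t ^ 2 ≤ 4 * c := by nlinarith [ht.1, ht.2, hs2]
    nlinarith
  have hFcont : ContinuousOn F (Set.Icc (-(2 * s)) (2 * s)) := by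
    apply ContinuousOn.mul (continuousOn_pow _)
    apply ContinuousOn.div
    · exact (continuousOn_const.mul ((Real.continuous_sqrt).comp_continuousOn (by fun_prop)))
    · fun_prop
    · exact hDt
  rw [hind]
  exact (hFcont.integrableOn_Icc).integrable_indicator measurableSet_Icc


/-- For `0 < c < 1`, the Kesten–McKay law
`μ_c = ((1-c)/2)·δ_{-(1+c)} + ρ_c(t)dt + ((1-c)/2)·δ_{1+c}` is a probability measure
whose `2n`-th moments are `∑_{k=0}^{n} (binom(2n,k) - binom(2n,k-1)) c^k`, with the
convention `binom(2n,-1) = 0`. -/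
theorem stmt_11 (c : ℝ) (h0 : 0 < c) (h1 : c < 1) (μ : Measure ℝ)
    (hμ : μ = ENNReal.ofReal ((1 - c) / 2) • Measure.dirac (-(1 + c))
        + volume.withDensity (fun t => ENNReal.ofReal (kestenMcKayDensity c t))
        + ENNReal.ofReal ((1 - c) / 2) • Measure.dirac (1 + c)) :
    IsProbabilityMeasure μ ∧
      ∀ n : ℕ,
        ∫ t, t ^ (2 * n) ∂μ =
          ∑ k ∈ Finset.range (n + 1),
            (((2 * n).choose k : ℝ) -
                if k = 0 then 0 else ((2 * n).choose (k - 1) : ℝ)) * c ^ k := by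
  have hnn := kmk_nonneg h0 h1
  have hmeas := kmk_measurable c
  have hfmeas : Measurable (fun t => (kestenMcKayDensity c t).toNNReal) :=
    hmeas.real_toNNReal
  have hwd : (volume.withDensity (fun t => ENNReal.ofReal (kestenMcKayDensity c t)))
      = volume.withDensity (fun t => ((kestenMcKayDensity c t).toNNReal : ENNReal)) := rfl
  have hρint : Integrable (kestenMcKayDensity c) volume := by
    have := integrable_moment h0 h1 0
    simpa using this
  have hρc : ∫ t, kestenMcKayDensity c t = c := by
    have := density_moment h0 h1 0
    simpa using this
  have hhalf : (0:ℝ) ≤ (1 - c) / 2 := by linarith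
  constructor
  · constructor
    rw [hμ]
    simp only [Measure.coe_add, Pi.add_apply, Measure.smul_apply, smul_eq_mul]
    rw [MeasureTheory.withDensity_apply _ MeasurableSet.univ, setLIntegral_univ,
      ← MeasureTheory.ofReal_integral_eq_lintegral_ofReal hρint
        (Filter.Eventually.of_forall hnn), hρc]
    rw [Measure.dirac_apply_of_mem (Set.mem_univ (-(1 + c))),
      Measure.dirac_apply_of_mem (Set.mem_univ (1 + c))]
    simp only [mul_one]
    rw [← ENNReal.ofReal_add hhalf h0.le, ← ENNReal.ofReal_add (by linarith) hhalf,
      show (1 - c) / 2 + c + (1 - c) / 2 = 1 by ring, ENNReal.ofReal_one]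
  · intro n
    have hdir : ∀ a : ℝ, Integrable (fun t : ℝ => t ^ (2 * n)) (Measure.dirac a) := by
      intro a
      refine ⟨(continuous_pow _).aestronglyMeasurable, ?_⟩
      simp only [MeasureTheory.HasFiniteIntegral, MeasureTheory.lintegral_dirac, nnnorm_pow]
      exact enorm_lt_top
    have hIntwd : Integrable (fun t : ℝ => t ^ (2 * n))
        (volume.withDensity (fun t => ENNReal.ofReal (kestenMcKayDensity c t))) := by
      rw [hwd, integrable_withDensity_iff_integrable_smul hfmeas]
      apply (integrable_moment h0 h1 n).congr
      apply Filter.Eventually.of_forall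
      intro t
      simp [NNReal.smul_def, Real.coe_toNNReal _ (hnn t), mul_comm]
    have hne : ENNReal.ofReal ((1 - c) / 2) ≠ ⊤ := ENNReal.ofReal_ne_top
    have hint1 : Integrable (fun t : ℝ => t ^ (2 * n))
        (ENNReal.ofReal ((1 - c) / 2) • Measure.dirac (-(1 + c))) :=
      (hdir _).smul_measure hne
    have hint3 : Integrable (fun t : ℝ => t ^ (2 * n))
        (ENNReal.ofReal ((1 - c) / 2) • Measure.dirac (1 + c)) :=
      (hdir _).smul_measure hne
    rw [hμ, integral_add_measure (hint1.add_measure hIntwd) hint3,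
      integral_add_measure hint1 hIntwd]
    rw [MeasureTheory.integral_smul_measure, MeasureTheory.integral_smul_measure,
      integral_dirac, integral_dirac, ENNReal.toReal_ofReal hhalf]
    have hwdint : ∫ t, t ^ (2 * n)
        ∂(volume.withDensity (fun t => ENNReal.ofReal (kestenMcKayDensity c t)))
        = ∫ t, t ^ (2 * n) * kestenMcKayDensity c t := by
      rw [hwd, integral_withDensity_eq_integral_smul hfmeas]
      congr 1
      funext t
      simp [NNReal.smul_def, Real.coe_toNNReal _ (hnn t), mul_comm]
    rw [hwdint, density_moment h0 h1 n]
    have hneg : (-(1 + c)) ^ (2 * n) = (1 + c) ^ (2 * n) := Even.neg_pow (even_two_mul n) _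
    rw [hneg]
    have hcm := comb_main c n
    have hbbsum : ∑ k ∈ Finset.range (n + 1),
        (((2 * n).choose k : ℝ) - if k = 0 then 0 else ((2 * n).choose (k - 1) : ℝ)) * c ^ k
        = ∑ k ∈ Finset.range (n + 1), bb (2 * n) k * c ^ k := by
      apply Finset.sum_congr rfl
      intro k _
      rfl
    rw [hbbsum]
    simp only [smul_eq_mul]
    linarith [hcm]
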